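/- arXiv:2404.05251 — 2 statements merged into one kernel-verified Lean document; each statement's English description precedes it below -/
import Mathlib

section
/- Let p be an odd prime, m a positive integer with gcd(m−1,p−1)=1, SQ the set of nonzero squares in F_p, and K(i,j)=∑_{c∈F_p^*} ξ_p^{c^{1−m}j−ci}. Then ∑_{i∈SQ} K(i,j) = −(p−1)/2 if j=0, and ∑_{i∈SQ} K(i,j) = (η(j)p+1)/2 if j≠0. -/
/-- `ξ_p^y` for `y : ZMod p`, where `ξ_p = exp(2πi/p)`. -/
noncomputable def xi (p : ℕ) (y : ZMod p) : ℂ :=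
  Complex.exp (2 * Real.pi * Complex.I * y.val / p)

/-- `K^{(m)}(i,j) = ∑_{c ∈ F_p^*} ξ_p^{c^{1-m} j - c i}`. -/
noncomputable def Km (p : ℕ) [Fact p.Prime] (m : ℕ) (i j : ZMod p) : ℂ :=
  ∑ c ∈ Finset.univ.filter (fun c : ZMod p => c ≠ 0),
    xi p (c ^ ((1 : ℤ) - m) * j - c * i)

open Finset AddChar

section Helpers

variable {p : ℕ} [Fact p.Prime]

lemma xi_eq_stdAddChar (y : ZMod p) : xi p y = ZMod.stdAddChar y := by
  rw [ZMod.stdAddChar_apply, ZMod.toCircle_apply]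
  rfl

lemma sum_stdAddChar_mul (t : ZMod p) :
    ∑ x : ZMod p, ZMod.stdAddChar (t * x) = if t = 0 then (p : ℂ) else 0 := by
  split_ifs with h
  · simp [h, ZMod.card]
  · have : ∑ x : ZMod p, ZMod.stdAddChar (t * x)
        = ∑ x : ZMod p, (ZMod.stdAddChar.mulShift t) x := by
      simp [AddChar.mulShift_apply]
    rw [this]
    exact AddChar.sum_eq_zero_of_ne_one (ZMod.isPrimitive_stdAddChar p h)

lemma sum_stdAddChar_mul_ne (t : ZMod p) (ht : t ≠ 0) :
    ∑ x ∈ univ.filter (fun x : ZMod p => x ≠ 0), ZMod.stdAddChar (t * x) = -1 := by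
  have h0 : ∑ x : ZMod p, ZMod.stdAddChar (t * x) = 0 := by
    rw [sum_stdAddChar_mul t]; simp [ht]
  have := Finset.sum_filter_add_sum_filter_not Finset.univ
    (fun x : ZMod p => x ≠ 0) (fun x => ZMod.stdAddChar (t * x))
  have h1 : ∑ x ∈ univ.filter (fun x : ZMod p => ¬ x ≠ 0),
      ZMod.stdAddChar (t * x) = 1 := by
    rw [Finset.sum_filter]
    simp
  rw [h0] at this
  linear_combination this - h1

end Helpers


section Helpers2

variable {p : ℕ} [Fact p.Prime]

noncomputable def chiC (p : ℕ) [Fact p.Prime] : MulChar (ZMod p) ℂ :=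
  (quadraticChar (ZMod p)).ringHomComp (Int.castRingHom ℂ)

lemma chiC_apply (a : ZMod p) : chiC p a = ((quadraticChar (ZMod p) a : ℤ) : ℂ) := rfl

lemma chiC_ne_one (hp : p ≠ 2) : chiC p ≠ 1 := by
  refine (MulChar.ringHomComp_ne_one_iff ?_).mpr (quadraticChar_ne_one ?_)
  · exact Int.cast_injective
  · rw [ZMod.ringChar_zmod_n]; exact hp

lemma chiC_quadratic : (chiC p).IsQuadratic :=
  (quadraticChar_isQuadratic (ZMod p)).comp _

lemma chiC_mul_self (t : ZMod p) (ht : t ≠ 0) : chiC p t * chiC p t = 1 := by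
  rw [chiC_apply, ← Int.cast_mul, ← pow_two]
  exact_mod_cast congrArg (fun z : ℤ => (z : ℂ)) (quadraticChar_sq_one ht)

lemma gauss_shift (t : ZMod p) (ht : t ≠ 0) :
    ∑ x : ZMod p, chiC p x * ZMod.stdAddChar (t * x)
      = chiC p t * gaussSum (chiC p) ZMod.stdAddChar := by
  have hu : IsUnit t := Ne.isUnit ht
  have := gaussSum_mulShift (chiC p) ZMod.stdAddChar hu.unit
  have h2 : gaussSum (chiC p) (ZMod.stdAddChar.mulShift hu.unit)
      = ∑ x : ZMod p, chiC p x * ZMod.stdAddChar (t * x) := by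
    simp [gaussSum, AddChar.mulShift_apply, hu.unit_spec]
  rw [h2, hu.unit_spec] at this
  calc ∑ x : ZMod p, chiC p x * ZMod.stdAddChar (t * x)
      = (chiC p t * chiC p t) * ∑ x : ZMod p, chiC p x * ZMod.stdAddChar (t * x) := by
        rw [chiC_mul_self t ht, one_mul]
    _ = chiC p t * gaussSum (chiC p) ZMod.stdAddChar := by rw [mul_assoc, this]

lemma sum_over_squares (f : ZMod p → ℂ) :
    ∑ i ∈ univ.filter (fun i : ZMod p => quadraticChar (ZMod p) i = 1), f i
      = (∑ x ∈ univ.filter (fun x : ZMod p => x ≠ 0), f x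
          + ∑ x ∈ univ.filter (fun x : ZMod p => x ≠ 0), chiC p x * f x) / 2 := by
  rw [← Finset.sum_add_distrib]
  have h1 : ∀ x ∈ univ.filter (fun x : ZMod p => x ≠ 0),
      f x + chiC p x * f x = if quadraticChar (ZMod p) x = 1 then 2 * f x else 0 := by
    intro x hx
    rw [mem_filter] at hx
    rcases quadraticChar_dichotomy hx.2 with h | h
    · rw [chiC_apply, h, if_pos rfl]; push_cast; ring
    · rw [chiC_apply, h, if_neg (by norm_num)]; push_cast; ring
  rw [Finset.sum_congr rfl h1, ← Finset.sum_filter]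
  have h3 : (univ.filter (fun x : ZMod p => x ≠ 0)).filter
        (fun x => quadraticChar (ZMod p) x = 1)
      = univ.filter (fun i : ZMod p => quadraticChar (ZMod p) i = 1) := by
    rw [Finset.filter_filter]
    apply Finset.filter_congr
    intro x _
    simp only [ne_eq, and_iff_right_iff_imp]
    intro h h0
    rw [h0, quadraticChar_zero] at h
    exact one_ne_zero h.symm
  rw [h3, ← Finset.mul_sum]
  ring

end Helpers2


section Helpers3

variable {p : ℕ} [Fact p.Prime]

lemma m_facts (hp : p ≠ 2) (m : ℕ) (hm : 1 ≤ m) (hgcd : Nat.gcd (m - 1) (p - 1) = 1) :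
    ∃ k : ℕ, m = 2 * k + 2 := by
  have hp3 : 3 ≤ p := by
    have := (Fact.out : p.Prime).two_le
    omega
  have hm1 : m - 1 ≠ 0 := by
    intro h
    rw [h, Nat.gcd_zero_left] at hgcd
    omega
  have hodd : ¬ 2 ∣ (m - 1) := by
    intro h2
    have hpodd : Odd p := (Fact.out : p.Prime).odd_of_ne_two hp
    have : 2 ∣ (p - 1) := by
      rcases hpodd with ⟨t, ht⟩
      exact ⟨t, by omega⟩
    have := Nat.dvd_gcd h2 this
    rw [hgcd] at this
    omega
  have : Odd (m - 1) := Nat.odd_iff.mpr (Nat.two_dvd_ne_zero.mp hodd)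
  rcases this with ⟨k, hk⟩
  exact ⟨k, by omega⟩

lemma e_eq (m : ℕ) (hm : 1 ≤ m) (c : ZMod p) :
    c ^ ((1 : ℤ) - m) = (c ^ (m - 1))⁻¹ := by
  have h1 : (1 : ℤ) - m = -((m - 1 : ℕ) : ℤ) := by omega
  rw [h1, zpow_neg, zpow_natCast]

lemma e_bijective (m : ℕ) (hm1 : m - 1 ≠ 0) (hm : 1 ≤ m)
    (hgcd : Nat.gcd (m - 1) (p - 1) = 1) :
    Function.Bijective (fun c : ZMod p => c ^ ((1 : ℤ) - m)) := by
  have hpow : Function.Bijective (fun c : ZMod p => c ^ (m - 1)) := by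
    rw [← Finite.injective_iff_bijective]
    intro a b hab
    simp only at hab
    by_cases ha : a = 0
    · subst ha
      rw [zero_pow hm1] at hab
      exact ((pow_eq_zero_iff hm1).mp hab.symm).symm
    · by_cases hb : b = 0
      · subst hb
        rw [zero_pow hm1] at hab
        exact (pow_eq_zero_iff hm1).mp hab
      · have hcard : Nat.Coprime (Nat.card (ZMod p)ˣ) (m - 1) := by
          rw [Nat.card_eq_fintype_card, ZMod.card_units p]
          exact Nat.Coprime.symm hgcd
        have hb2 := Nat.Coprime.pow_left_bijective hcard
        have h2 : (Units.mk0 a ha) ^ (m - 1) = (Units.mk0 b hb) ^ (m - 1) := by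
          ext
          simpa using hab
        have := hb2.injective h2
        have := congrArg Units.val this
        simpa using this
  have hinv : Function.Bijective (fun c : ZMod p => c⁻¹) :=
    inv_involutive.bijective
  have : (fun c : ZMod p => c ^ ((1 : ℤ) - m))
      = (fun c : ZMod p => c⁻¹) ∘ (fun c : ZMod p => c ^ (m - 1)) := by
    funext c
    exact e_eq m hm c
  rw [this]
  exact hinv.comp hpow

lemma quadChar_e (m k : ℕ) (hk : m = 2 * k + 2) (c : ZMod p) (hc : c ≠ 0) :
    quadraticChar (ZMod p) (c ^ ((1 : ℤ) - m)) = quadraticChar (ZMod p) c := by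
  have hy : c ^ (-(k + 1) : ℤ) ≠ 0 := zpow_ne_zero _ hc
  have hsplit : c ^ ((1 : ℤ) - m) = c * (c ^ (-(k + 1) : ℤ)) ^ 2 := by
    have h2 : c * (c ^ (-(k + 1) : ℤ)) ^ 2 = c ^ ((1 : ℤ) + (-(k + 1) + -(k + 1))) := by
      rw [sq, ← zpow_add₀ hc, zpow_add₀ hc 1 (-(k+1) + -(k+1)), zpow_one]
    rw [h2]
    congr 1
    omega
  rw [hsplit, map_mul, map_pow, quadraticChar_sq_one hy, mul_one]

lemma e_ne_zero (m : ℕ) (hm1 : m - 1 ≠ 0) (c : ZMod p) (hc : c ≠ 0) :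
    c ^ ((1 : ℤ) - m) ≠ 0 := by
  apply zpow_ne_zero _ hc

end Helpers3

section Helpers4

variable {p : ℕ} [Fact p.Prime]

lemma sum_e_bij (m : ℕ) (hm : 1 ≤ m) (hm1 : m - 1 ≠ 0)
    (hgcd : Nat.gcd (m - 1) (p - 1) = 1) (F : ZMod p → ℂ) :
    ∑ c ∈ univ.filter (fun x : ZMod p => x ≠ 0), F (c ^ ((1 : ℤ) - m))
      = ∑ d ∈ univ.filter (fun x : ZMod p => x ≠ 0), F d := by
  have hbij := e_bijective (p := p) m hm1 hm hgcd
  refine Finset.sum_bij (fun c _ => c ^ ((1 : ℤ) - m)) ?_ ?_ ?_ ?_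
  · intro a ha
    rw [mem_filter] at ha ⊢
    exact ⟨mem_univ _, zpow_ne_zero _ ha.2⟩
  · intro a _ b _ hab
    exact hbij.injective hab
  · intro d hd
    obtain ⟨c, hc⟩ := hbij.surjective d
    rw [mem_filter] at hd
    have hc' : c ^ ((1 : ℤ) - m) = d := hc
    have hc0 : c ≠ 0 := by
      intro h0
      rw [h0, zero_zpow _ (by omega : (1 : ℤ) - m ≠ 0)] at hc'
      exact hd.2 hc'.symm
    exact ⟨c, mem_filter.mpr ⟨mem_univ _, hc0⟩, hc'⟩
  · intro a _
    rfl

end Helpers4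

theorem sum_Km_over_squares (p : ℕ) [Fact p.Prime] (hp : p ≠ 2)
    (m : ℕ) (hm : 1 ≤ m) (hgcd : Nat.gcd (m - 1) (p - 1) = 1) (j : ZMod p) :
    ∑ i ∈ Finset.univ.filter (fun i : ZMod p => quadraticChar (ZMod p) i = 1),
        Km p m i j
      = if j = 0 then -((p : ℂ) - 1) / 2
        else ((quadraticChar (ZMod p) j : ℂ) * p + 1) / 2 := by
  obtain ⟨k, hk⟩ := m_facts hp m hm hgcd
  have hm1 : m - 1 ≠ 0 := by omega
  have hp3 : 3 ≤ p := by
    have := (Fact.out : p.Prime).two_le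
    omega
  have hcne : chiC p ≠ 1 := chiC_ne_one hp
  have hG2 : gaussSum (chiC p) ZMod.stdAddChar ^ 2
      = chiC p (-1) * p := by
    rw [gaussSum_sq hcne chiC_quadratic (ZMod.isPrimitive_stdAddChar p), ZMod.card]
  -- Step 1: unfold and swap the sums
  have step1 : ∑ i ∈ univ.filter (fun i : ZMod p => quadraticChar (ZMod p) i = 1), Km p m i j
      = ∑ c ∈ univ.filter (fun x : ZMod p => x ≠ 0),
          ZMod.stdAddChar (c ^ ((1 : ℤ) - m) * j)
            * ∑ i ∈ univ.filter (fun i : ZMod p => quadraticChar (ZMod p) i = 1),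
                ZMod.stdAddChar (-(c * i)) := by
    unfold Km
    rw [Finset.sum_comm]
    refine Finset.sum_congr rfl fun c _ => ?_
    rw [Finset.mul_sum]
    refine Finset.sum_congr rfl fun i _ => ?_
    rw [xi_eq_stdAddChar, sub_eq_add_neg, AddChar.map_add_eq_mul]
  -- Step 2: evaluate the inner sum
  have hT : ∀ c ∈ univ.filter (fun x : ZMod p => x ≠ 0),
      (∑ i ∈ univ.filter (fun i : ZMod p => quadraticChar (ZMod p) i = 1),
        ZMod.stdAddChar (-(c * i)))
      = (chiC p (-1) * chiC p c * gaussSum (chiC p) ZMod.stdAddChar - 1) / 2 := by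
    intro c hc
    rw [mem_filter] at hc
    have hcn : (-c) ≠ 0 := neg_ne_zero.mpr hc.2
    have h1 : ∀ i : ZMod p, -(c * i) = (-c) * i := fun i => by ring
    simp_rw [h1]
    rw [sum_over_squares (fun x => ZMod.stdAddChar ((-c) * x))]
    have hB := sum_stdAddChar_mul_ne (-c) hcn
    have hA : ∑ x ∈ univ.filter (fun x : ZMod p => x ≠ 0),
        chiC p x * ZMod.stdAddChar ((-c) * x)
        = chiC p (-c) * gaussSum (chiC p) ZMod.stdAddChar := by
      rw [Finset.sum_filter_of_ne (fun x _ hx => by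
        intro h0
        rw [h0, MulChar.map_zero, zero_mul] at hx
        exact hx rfl)]
      exact gauss_shift (-c) hcn
    rw [hA, hB, show (-c : ZMod p) = (-1) * c by ring, map_mul]
    ring
  -- Step 3: substitute, use `χ c = χ (c^(1-m))`, and change variables
  have step3 : ∑ i ∈ univ.filter (fun i : ZMod p => quadraticChar (ZMod p) i = 1), Km p m i j
      = (chiC p (-1) * gaussSum (chiC p) ZMod.stdAddChar / 2)
          * (∑ d ∈ univ.filter (fun x : ZMod p => x ≠ 0), chiC p d * ZMod.stdAddChar (d * j))
        - (1 / 2) * (∑ d ∈ univ.filter (fun x : ZMod p => x ≠ 0), ZMod.stdAddChar (d * j)) := by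
    rw [step1, Finset.sum_congr rfl (fun c hc => by rw [hT c hc])]
    have hchi : ∀ c ∈ univ.filter (fun x : ZMod p => x ≠ 0),
        chiC p c = chiC p (c ^ ((1 : ℤ) - m)) := by
      intro c hc
      rw [mem_filter] at hc
      rw [chiC_apply, chiC_apply, quadChar_e m k hk c hc.2]
    rw [Finset.sum_congr rfl (fun c hc => by rw [hchi c hc])]
    have := sum_e_bij (p := p) m hm hm1 hgcd
      (fun d => ZMod.stdAddChar (d * j)
        * ((chiC p (-1) * chiC p d * gaussSum (chiC p) ZMod.stdAddChar - 1) / 2))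
    rw [this]
    rw [Finset.mul_sum, Finset.mul_sum, ← Finset.sum_sub_distrib]
    refine Finset.sum_congr rfl fun d _ => ?_
    ring
  rw [step3]
  by_cases hj : j = 0
  · subst hj
    rw [if_pos rfl]
    have hA0 : ∑ d ∈ univ.filter (fun x : ZMod p => x ≠ 0),
        chiC p d * ZMod.stdAddChar (d * 0) = 0 := by
      simp only [mul_zero, AddChar.map_zero_eq_one, mul_one]
      rw [Finset.sum_filter_of_ne (fun x _ hx => by
        intro h0
        rw [h0, MulChar.map_zero] at hx
        exact hx rfl)]
      exact MulChar.sum_eq_zero_of_ne_one hcne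
    have hB0 : ∑ d ∈ univ.filter (fun x : ZMod p => x ≠ 0),
        ZMod.stdAddChar (d * (0 : ZMod p)) = (p : ℂ) - 1 := by
      simp only [mul_zero, AddChar.map_zero_eq_one]
      rw [Finset.sum_const, nsmul_eq_mul, mul_one]
      have hcard : (univ.filter (fun x : ZMod p => x ≠ 0)).card = p - 1 := by
        rw [Finset.filter_ne', Finset.card_erase_of_mem (mem_univ _), Finset.card_univ, ZMod.card]
      rw [hcard, Nat.cast_sub (by omega), Nat.cast_one]
    rw [hA0, hB0]
    ring
  · rw [if_neg hj]
    have hA : ∑ d ∈ univ.filter (fun x : ZMod p => x ≠ 0),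
        chiC p d * ZMod.stdAddChar (d * j)
        = chiC p j * gaussSum (chiC p) ZMod.stdAddChar := by
      rw [Finset.sum_filter_of_ne (fun x _ hx => by
        intro h0
        rw [h0, MulChar.map_zero, zero_mul] at hx
        exact hx rfl)]
      simp_rw [mul_comm _ j]
      exact gauss_shift j hj
    have hB : ∑ d ∈ univ.filter (fun x : ZMod p => x ≠ 0),
        ZMod.stdAddChar (d * j) = -1 := by
      simp_rw [mul_comm _ j]
      exact sum_stdAddChar_mul_ne j hj
    rw [hA, hB]
    have hm2 : chiC p (-1) * chiC p (-1) = 1 :=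
      chiC_mul_self (-1) (by
        intro h
        have := neg_eq_zero.mp h
        exact one_ne_zero this)
    have hcj : (quadraticChar (ZMod p) j : ℂ) = chiC p j := rfl
    rw [hcj]
    linear_combination (chiC p (-1) * chiC p j / 2) * hG2 + (chiC p j * (p : ℂ) / 2) * hm2
end

section
/- Let p be an odd prime, m a positive integer with gcd(m−1,p−1)=1, NSQ the set of nonsquares in F_p^*, and K(i,j)=∑_{c∈F_p^*} ξ_p^{c^{1−m}j−ci}. Then ∑_{i∈NSQ} K(i,j) = −(p−1)/2 if j=0, and ∑_{i∈NSQ} K(i,j) = (−η(j)p+1)/2 if j≠0. -/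
theorem sum_Km_over_nonsquares (p : ℕ) [Fact p.Prime] (hp : p ≠ 2)
    (m : ℕ) (hm : 1 ≤ m) (hgcd : Nat.gcd (m - 1) (p - 1) = 1) (j : ZMod p) :
    ∑ i ∈ Finset.univ.filter (fun i : ZMod p => quadraticChar (ZMod p) i = -1),
        Km p m i j
      = if j = 0 then -((p : ℂ) - 1) / 2
        else (-(quadraticChar (ZMod p) j : ℂ) * p + 1) / 2 := by
  have hp' : p.Prime := Fact.out
  have hp0 : p ≠ 0 := hp'.ne_zero
  have hp3 : 3 ≤ p := by
    rcases hp'.two_le.lt_or_eq with h | h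
    · omega
    · exact absurd h.symm hp
  -- the additive character
  have hζ : Complex.exp (2 * Real.pi * Complex.I / p) ^ p = 1 :=
    (Complex.isPrimitiveRoot_exp p hp0).pow_eq_one
  set ψ : AddChar (ZMod p) ℂ := AddChar.zmodChar p hζ with hψdef
  have hψprim : ψ.IsPrimitive :=
    AddChar.zmodChar_primitive_of_primitive_root p (Complex.isPrimitiveRoot_exp p hp0)
  have hxi : ∀ y : ZMod p, xi p y = ψ y := by
    intro y
    rw [hψdef, AddChar.zmodChar_apply, ← Complex.exp_nat_mul, xi]
    congr 1
    ring
  -- the multiplicative character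
  set χ : MulChar (ZMod p) ℂ := (quadraticChar (ZMod p)).ringHomComp (Int.castRingHom ℂ)
    with hχdef
  have hringChar : ringChar (ZMod p) ≠ 2 := by
    rw [ZMod.ringChar_zmod_n]; exact hp
  have hχ1 : χ ≠ 1 :=
    (MulChar.ringHomComp_ne_one_iff (RingHom.injective_int _)).mpr
      (quadraticChar_ne_one hringChar)
  have hχq : χ.IsQuadratic := (quadraticChar_isQuadratic (ZMod p)).comp _
  have hχapp : ∀ x : ZMod p, χ x = ((quadraticChar (ZMod p) x : ℤ) : ℂ) := by
    intro x; rw [hχdef, MulChar.ringHomComp_apply]; rfl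
  have hχ01 : ∀ x : ZMod p, x ≠ 0 → χ x = 1 ∨ χ x = -1 := by
    intro x hx
    rcases quadraticChar_dichotomy hx with h | h
    · left; rw [hχapp, h]; norm_num
    · right; rw [hχapp, h]; norm_num
  have hχsq : ∀ x : ZMod p, x ≠ 0 → χ x * χ x = 1 := by
    intro x hx; rcases hχ01 x hx with h | h <;> rw [h] <;> norm_num
  have hχinv : ∀ x : ZMod p, x ≠ 0 → χ x⁻¹ = χ x := by
    intro x hx
    have h1 : χ x⁻¹ * χ x = 1 := by
      rw [← map_mul, inv_mul_cancel₀ hx, map_one]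
    calc χ x⁻¹ = χ x⁻¹ * (χ x * χ x) := by rw [hχsq x hx, mul_one]
    _ = (χ x⁻¹ * χ x) * χ x := by ring
    _ = χ x := by rw [h1, one_mul]
  have hχzero : χ 0 = 0 := by
    rw [hχapp, quadraticChar_zero]; norm_num
  -- Gauss sum
  set g := gaussSum χ ψ with hgdef
  have hneg1 : (-1 : ZMod p) ≠ 0 := by
    intro h
    have : (1 : ZMod p) = 0 := by linear_combination -h
    exact one_ne_zero this
  have hg2 : g ^ 2 = χ (-1) * p := by
    have h := gaussSum_sq hχ1 hχq hψprim
    rwa [ZMod.card p] at h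
  have hgp : χ (-1) * g ^ 2 = p := by
    rw [hg2, ← mul_assoc, hχsq _ hneg1, one_mul]
  -- sums over nonzero elements
  have hA : ∀ b : ZMod p, b ≠ 0 →
      (∑ i ∈ Finset.univ.filter (fun i : ZMod p => i ≠ 0), ψ (i * b)) = -1 := by
    intro b hb
    have h0 : (∑ i : ZMod p, ψ (i * b)) = 0 := by
      rw [AddChar.sum_mulShift b hψprim, if_neg hb]
      norm_num
    rw [Finset.filter_ne']
    rw [← Finset.add_sum_erase Finset.univ (fun i : ZMod p => ψ (i * b))
      (Finset.mem_univ 0)] at h0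
    simp only [zero_mul, AddChar.map_zero_eq_one] at h0
    linear_combination h0
  have hB : ∀ b : ZMod p, b ≠ 0 →
      (∑ i ∈ Finset.univ.filter (fun i : ZMod p => i ≠ 0), χ i * ψ (i * b))
        = χ b * g := by
    intro b hb
    have h1 : (∑ i ∈ Finset.univ.filter (fun i : ZMod p => i ≠ 0), χ i * ψ (i * b))
        = ∑ i : ZMod p, χ i * ψ (i * b) := by
      rw [Finset.filter_ne']
      exact Finset.sum_erase _ (by rw [hχzero, zero_mul])
    have h2 : (∑ i : ZMod p, χ i * ψ (i * b)) = gaussSum χ (ψ.mulShift b) := by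
      rw [gaussSum]
      exact Finset.sum_congr rfl fun i _ => by rw [AddChar.mulShift_apply, mul_comm b i]
    have hu : IsUnit b := Ne.isUnit hb
    have h3 : χ b * gaussSum χ (ψ.mulShift b) = g := by
      have := gaussSum_mulShift χ ψ hu.unit
      rwa [hu.unit_spec] at this
    rw [h1, h2]
    calc gaussSum χ (ψ.mulShift b)
        = (χ b * χ b) * gaussSum χ (ψ.mulShift b) := by rw [hχsq b hb, one_mul]
      _ = χ b * (χ b * gaussSum χ (ψ.mulShift b)) := by ring
      _ = χ b * g := by rw [h3]
  have hB0 : (∑ i ∈ Finset.univ.filter (fun i : ZMod p => i ≠ 0), χ i) = 0 := by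
    rw [Finset.filter_ne']
    rw [Finset.sum_erase _ hχzero]
    exact MulChar.sum_eq_zero_of_ne_one hχ1
  -- the set of nonsquares as a subfilter of nonzero elements
  have hNS : (Finset.univ.filter (fun i : ZMod p => quadraticChar (ZMod p) i = -1))
      = (Finset.univ.filter (fun i : ZMod p => i ≠ 0)).filter
          (fun i => quadraticChar (ZMod p) i = -1) := by
    rw [Finset.filter_filter]
    refine Finset.filter_congr fun x _ => ?_
    constructor
    · intro h
      refine ⟨fun h0 => ?_, h⟩
      rw [h0, quadraticChar_zero] at h
      norm_num at h
    · exact fun h => h.2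
  -- the key inner sum
  have key : ∀ c : ZMod p, c ≠ 0 →
      (∑ i ∈ Finset.univ.filter (fun i : ZMod p => quadraticChar (ZMod p) i = -1),
        ψ (i * (-c))) = (-1 - χ (-c) * g) / 2 := by
    intro c hc
    have hnc : (-c) ≠ 0 := neg_ne_zero.mpr hc
    have hsplit : (∑ i ∈ Finset.univ.filter (fun i : ZMod p => quadraticChar (ZMod p) i = -1),
          ψ (i * (-c)))
        = ∑ i ∈ Finset.univ.filter (fun i : ZMod p => i ≠ 0),
            (ψ (i * (-c)) - χ i * ψ (i * (-c))) / 2 := by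
      rw [hNS, Finset.sum_filter]
      refine Finset.sum_congr rfl fun i hi => ?_
      have hi0 : i ≠ 0 := (Finset.mem_filter.mp hi).2
      rcases quadraticChar_dichotomy hi0 with h | h
      · rw [if_neg (by rw [h]; norm_num)]
        have hχi : χ i = 1 := by rw [hχapp, h]; norm_num
        rw [hχi]; ring
      · rw [if_pos h]
        have hχi : χ i = -1 := by rw [hχapp, h]; norm_num
        rw [hχi]; ring
    rw [hsplit, ← Finset.sum_div, Finset.sum_sub_distrib, hA _ hnc, hB _ hnc]
  -- rewrite Km through the additive character
  have hKm : ∀ i : ZMod p, Km p m i j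
      = ∑ c ∈ Finset.univ.filter (fun c : ZMod p => c ≠ 0),
          ψ (c ^ ((1 : ℤ) - m) * j) * ψ (i * (-c)) := by
    intro i
    rw [Km]
    refine Finset.sum_congr rfl fun c _ => ?_
    rw [hxi, sub_eq_add_neg, AddChar.map_add_eq_mul]
    congr 1
    ring
  -- exponent arithmetic
  have hm2 : 2 ≤ m := by
    by_contra h
    have hm1 : m = 1 := by omega
    rw [hm1] at hgcd
    simp only [Nat.sub_self, Nat.gcd_zero_left] at hgcd
    omega
  obtain ⟨a, -, ha⟩ := Nat.exists_mul_mod_eq_one_of_coprime hgcd (by omega)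
  have hpow_ka : ∀ c : ZMod p, c ≠ 0 → c ^ ((m - 1) * a) = c := by
    intro c hc
    have hsplit : (m - 1) * a = (p - 1) * ((m - 1) * a / (p - 1)) + 1 := by
      have := Nat.div_add_mod ((m - 1) * a) (p - 1)
      omega
    rw [hsplit, pow_add, pow_mul, ZMod.pow_card_sub_one_eq_one hc, one_pow, one_mul, pow_one]
  have hzpow : ∀ c : ZMod p, c ^ ((1 : ℤ) - m) = (c ^ (m - 1))⁻¹ := by
    intro c
    have hz : (1 : ℤ) - m = -((m - 1 : ℕ) : ℤ) := by
      have : ((m - 1 : ℕ) : ℤ) = (m : ℤ) - 1 := by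
        push_cast [Nat.cast_sub hm]; ring
      omega
    rw [hz, zpow_neg, zpow_natCast]
  have hinvol1 : ∀ c : ZMod p, c ≠ 0 → ((c ^ ((1 : ℤ) - m)) ^ a)⁻¹ = c := by
    intro c hc
    rw [hzpow, inv_pow, inv_inv, ← pow_mul, hpow_ka c hc]
  have hinvol2 : ∀ d : ZMod p, d ≠ 0 → ((d ^ a)⁻¹) ^ ((1 : ℤ) - m) = d := by
    intro d hd
    rw [hzpow, inv_pow, inv_inv, ← pow_mul, mul_comm a (m - 1), hpow_ka d hd]
  have hkodd : Odd (m - 1) := by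
    obtain ⟨t, ht⟩ := hp'.odd_of_ne_two hp
    have hpe : 2 ∣ (p - 1) := by omega
    by_contra hodd
    have h2k : 2 ∣ (m - 1) := by
      rcases Nat.even_or_odd (m - 1) with he | ho
      · exact he.two_dvd
      · exact absurd ho hodd
    have := Nat.dvd_gcd h2k hpe
    rw [hgcd] at this
    omega
  have hχz : ∀ c : ZMod p, c ≠ 0 → χ (c ^ ((1 : ℤ) - m)) = χ c := by
    intro c hc
    rw [hzpow, hχinv _ (pow_ne_zero _ hc), map_pow]
    rcases hχ01 c hc with h | h <;> rw [h]
    · exact one_pow _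
    · rw [hkodd.neg_one_pow]
  -- main computation
  calc ∑ i ∈ Finset.univ.filter (fun i : ZMod p => quadraticChar (ZMod p) i = -1), Km p m i j
      = ∑ i ∈ Finset.univ.filter (fun i : ZMod p => quadraticChar (ZMod p) i = -1),
          ∑ c ∈ Finset.univ.filter (fun c : ZMod p => c ≠ 0),
            ψ (c ^ ((1 : ℤ) - m) * j) * ψ (i * (-c)) :=
        Finset.sum_congr rfl fun i _ => hKm i
    _ = ∑ c ∈ Finset.univ.filter (fun c : ZMod p => c ≠ 0),
          ∑ i ∈ Finset.univ.filter (fun i : ZMod p => quadraticChar (ZMod p) i = -1),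
            ψ (c ^ ((1 : ℤ) - m) * j) * ψ (i * (-c)) := Finset.sum_comm
    _ = ∑ c ∈ Finset.univ.filter (fun c : ZMod p => c ≠ 0),
          ψ (c ^ ((1 : ℤ) - m) * j) * ((-1 - χ (-c) * g) / 2) := by
        refine Finset.sum_congr rfl fun c hc => ?_
        rw [← Finset.mul_sum, key c (Finset.mem_filter.mp hc).2]
    _ = ∑ d ∈ Finset.univ.filter (fun d : ZMod p => d ≠ 0),
          ψ (d * j) * ((-1 - (χ (-1) * χ d) * g) / 2) := by
        refine Finset.sum_nbij' (fun c => c ^ ((1 : ℤ) - m)) (fun d => (d ^ a)⁻¹)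
          ?_ ?_ ?_ ?_ ?_
        · intro c hc
          simp only [Finset.mem_filter, Finset.mem_univ, true_and] at hc ⊢
          exact zpow_ne_zero _ hc
        · intro d hd
          simp only [Finset.mem_filter, Finset.mem_univ, true_and] at hd ⊢
          exact inv_ne_zero (pow_ne_zero _ hd)
        · intro c hc
          exact hinvol1 c (Finset.mem_filter.mp hc).2
        · intro d hd
          exact hinvol2 d (Finset.mem_filter.mp hd).2
        · intro c hc
          have hc0 : c ≠ 0 := (Finset.mem_filter.mp hc).2
          have hx : χ (-c) = χ (-1) * χ (c ^ ((1 : ℤ) - m)) := by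
            rw [hχz c hc0, ← map_mul, neg_one_mul]
          rw [hx]
    _ = if j = 0 then -((p : ℂ) - 1) / 2
        else (-(quadraticChar (ZMod p) j : ℂ) * p + 1) / 2 := by
        by_cases hj : j = 0
        · rw [if_pos hj, hj]
          have hcard : ((Finset.univ.filter (fun d : ZMod p => d ≠ 0)).card : ℂ)
              = (p : ℂ) - 1 := by
            rw [Finset.filter_ne', Finset.card_erase_of_mem (Finset.mem_univ 0),
              Finset.card_univ, ZMod.card, Nat.cast_sub hp'.one_lt.le, Nat.cast_one]
          calc ∑ d ∈ Finset.univ.filter (fun d : ZMod p => d ≠ 0),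
                ψ (d * 0) * ((-1 - (χ (-1) * χ d) * g) / 2)
              = ∑ d ∈ Finset.univ.filter (fun d : ZMod p => d ≠ 0),
                  ((-1) / 2 - (χ (-1) * g / 2) * χ d) := by
                refine Finset.sum_congr rfl fun d _ => ?_
                rw [mul_zero, AddChar.map_zero_eq_one]
                ring
            _ = -((p : ℂ) - 1) / 2 := by
                rw [Finset.sum_sub_distrib, ← Finset.mul_sum, hB0, mul_zero, sub_zero,
                  Finset.sum_const, nsmul_eq_mul, hcard]
                ring
        · rw [if_neg hj]
          calc ∑ d ∈ Finset.univ.filter (fun d : ZMod p => d ≠ 0),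
                ψ (d * j) * ((-1 - (χ (-1) * χ d) * g) / 2)
              = ∑ d ∈ Finset.univ.filter (fun d : ZMod p => d ≠ 0),
                  ((-1) / 2 * ψ (d * j) - (χ (-1) * g / 2) * (χ d * ψ (d * j))) := by
                refine Finset.sum_congr rfl fun d _ => ?_
                ring
            _ = (-1) / 2 * (-1) - (χ (-1) * g / 2) * (χ j * g) := by
                rw [Finset.sum_sub_distrib, ← Finset.mul_sum, ← Finset.mul_sum,
                  hA j hj, hB j hj]
            _ = (-(quadraticChar (ZMod p) j : ℂ) * p + 1) / 2 := by
                rw [← hχapp]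
                linear_combination (-(χ j) / 2) * hgp
end
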